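/- Let a₀, â₀ ∈ ℝ and let (a_k)_{k≥1}, (â_k)_{k≥1} be real sequences with Σ_{k≥1} |a_k| < ∞ and Σ_{k≥1} |â_k| < ∞. Define f(λ) := exp(a₀ + 2 Σ_{k≥1} a_k cos(kλ)) and f̂(λ) := exp(â₀ + 2 Σ_{k≥1} â_k cos(kλ)), and set σ := (2π e^{a₀})^{1/2}, σ̂ := (2π e^{â₀})^{1/2}. Let (c_k) and (ĉ_k) be obtained from (a_k)_{k≥1} and (â_k)_{k≥1} by the MA recursion. Then Σ_{k=0}^∞ (σ c_k − σ̂ ĉ_k)² = ∫₀^{2π} [ f(λ) + f̂(λ) − 2 (f(λ) f̂(λ))^{1/2} cos( Σ_{k≥1} (a_k − â_k) sin(kλ) ) ] dλ, both sides being finite. -/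

import Mathlib

open MeasureTheory Filter Topology

/-- The (real) MA recursion: `c 0 = 1` and
`c (k+1) = ∑_{j=0}^{k} (1 - j/(k+1)) * a (k+1-j) * c j`. -/
def IsMARecR (a c : ℕ → ℝ) : Prop :=
  c 0 = 1 ∧
    ∀ k : ℕ, c (k + 1) =
      ∑ j ∈ Finset.range (k + 1), (1 - (j : ℝ) / ((k : ℝ) + 1)) * a (k + 1 - j) * c j

/-- The spectral density with cepstral coefficients `a₀` and `(a_k)_{k ≥ 1}`:
`f(λ) = exp (a₀ + 2 ∑_{k ≥ 1} a_k cos (kλ))`. -/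
noncomputable def expSpec (a0 : ℝ) (a : ℕ → ℝ) (x : ℝ) : ℝ :=
  Real.exp (a0 + 2 * ∑' k : ℕ, a (k + 1) * Real.cos (((k : ℝ) + 1) * x))

/-- `σ = (2π e^{a₀})^{1/2}`. -/
noncomputable def sigmaOf (a0 : ℝ) : ℝ := Real.sqrt (2 * Real.pi * Real.exp a0)


section AuxiliaryMAProof

open Set

noncomputable def maRec (a : ℕ → ℝ) : ℕ → ℝ
  | 0 => 1
  | (k+1) => ∑ j ∈ (Finset.range (k+1)).attach,
      (1 - (j.1 : ℝ) / ((k : ℝ) + 1)) * a (k + 1 - j.1) * maRec a j.1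
  decreasing_by exact Finset.mem_range.mp j.2

lemma isMARecR_maRec (a : ℕ → ℝ) : IsMARecR a (maRec a) := by
  refine ⟨by rw [maRec], fun k => ?_⟩
  rw [maRec]
  exact Finset.sum_attach (Finset.range (k+1))
    (fun (j : ℕ) => (1 - (j : ℝ) / ((k : ℝ) + 1)) * a (k + 1 - j) * maRec a j)

lemma maRec_nonneg (a : ℕ → ℝ) (h : ∀ k, 0 ≤ a k) : ∀ n, 0 ≤ maRec a n := by
  intro n
  induction n using Nat.strong_induction_on with
  | _ n ih =>
    match n with
    | 0 => rw [maRec]; exact zero_le_one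
    | (k+1) =>
      rw [maRec]
      apply Finset.sum_nonneg
      rintro ⟨j, hj⟩ -
      simp only
      have hj' : j ≤ k := Nat.lt_succ_iff.mp (Finset.mem_range.mp hj)
      have h1 : (j : ℝ) / ((k : ℝ) + 1) ≤ 1 := by
        rw [div_le_one (by positivity)]
        have : (j : ℝ) ≤ (k : ℝ) := by exact_mod_cast hj'
        linarith
      have h2 := ih j (Finset.mem_range.mp hj)
      have h3 := h (k + 1 - j)
      have h0 : 0 ≤ 1 - (j : ℝ) / ((k : ℝ) + 1) := by linarith
      exact mul_nonneg (mul_nonneg h0 h3) h2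

lemma abs_le_maRec {a c : ℕ → ℝ} (hc : IsMARecR a c) :
    ∀ n, |c n| ≤ maRec (fun k => |a k|) n := by
  intro n
  induction n using Nat.strong_induction_on with
  | _ n ih =>
    match n with
    | 0 => rw [maRec]; simp [hc.1]
    | (k+1) =>
      rw [hc.2, maRec, Finset.sum_attach (Finset.range (k+1))
        (fun (j : ℕ) => (1 - (j : ℝ) / ((k : ℝ) + 1)) * |a (k + 1 - j)| * maRec (fun i => |a i|) j)]
      refine (Finset.abs_sum_le_sum_abs _ _).trans (Finset.sum_le_sum ?_)
      intro j hj
      have hj' : j ≤ k := Nat.lt_succ_iff.mp (Finset.mem_range.mp hj)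
      have h1 : 0 ≤ 1 - (j : ℝ) / ((k : ℝ) + 1) := by
        rw [sub_nonneg, div_le_one (by positivity)]
        have : (j : ℝ) ≤ (k : ℝ) := by exact_mod_cast hj'
        linarith
      rw [abs_mul, abs_mul, abs_of_nonneg h1]
      have h2 := ih j (Finset.mem_range.mp hj)
      exact mul_le_mul_of_nonneg_left h2 (mul_nonneg h1 (abs_nonneg _))

lemma marec_deriv_form {a c : ℕ → ℝ} (hc : IsMARecR a c) (n : ℕ) :
    ((n : ℝ) + 1) * c (n + 1) =
      ∑ j ∈ Finset.range (n + 1), ((n + 1 - j : ℕ) : ℝ) * a (n + 1 - j) * c j := by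
  rw [hc.2, Finset.mul_sum]
  refine Finset.sum_congr rfl ?_
  intro j hj
  have hj' : j ≤ n := Nat.lt_succ_iff.mp (Finset.mem_range.mp hj)
  have hcast : ((n + 1 - j : ℕ) : ℝ) = (n : ℝ) + 1 - (j : ℝ) := by
    rw [Nat.cast_sub (by omega)]
    push_cast; ring
  rw [hcast]
  field_simp

lemma maRec_bounded (b : ℕ → ℝ) (hb0 : ∀ k, 0 ≤ b k) (hb : Summable fun k => b (k+1))
    (d : ℕ → ℝ) (hd0 : ∀ n, 0 ≤ d n) (hdrec : ∀ m : ℕ, ((m : ℝ) + 1) * d (m + 1) =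
      ∑ j ∈ Finset.range (m + 1), ((m + 1 - j : ℕ) : ℝ) * b (m + 1 - j) * d j) :
    ∃ C : ℝ, ∀ n, d n ≤ C := by
  set S : ℝ := ∑' k, b (k + 1) with hS
  have hS0 : 0 ≤ S := tsum_nonneg (fun k => hb0 _)
  -- choose N with tail ≤ 1/4
  obtain ⟨N, hN⟩ : ∃ N : ℕ, ∑' k, b (k + N + 1) ≤ 1/4 := by
    have h1 : Tendsto (fun n => ∑ i ∈ Finset.range n, b (i + 1)) atTop (𝓝 S) :=
      hb.hasSum.tendsto_sum_nat
    have h2 : ∀ᶠ n in atTop, S - (1/4 : ℝ) < ∑ i ∈ Finset.range n, b (i + 1) := by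
      apply h1.eventually
      exact eventually_gt_nhds (by linarith)
    obtain ⟨N, hN⟩ := h2.exists
    refine ⟨N, ?_⟩
    have h3 : ∑ i ∈ Finset.range N, b (i + 1) + ∑' k, b (k + N + 1) = S := by
      have := Summable.sum_add_tsum_nat_add (f := fun k => b (k+1)) N hb
      simpa [add_right_comm] using this
    linarith
  have hT0 : 0 ≤ ∑' k, b (k + N + 1) := tsum_nonneg (fun k => hb0 _)
  set n₀ : ℕ := ⌈(4 : ℝ) * N * S⌉₊ with hn₀
  set B : ℝ := 1 + ∑ j ∈ Finset.range (n₀ + 1), d j with hB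
  have hB1 : (1:ℝ) ≤ B := by
    have : 0 ≤ ∑ j ∈ Finset.range (n₀ + 1), d j := Finset.sum_nonneg fun j _ => hd0 j
    simp [hB]; linarith
  have hsmall : ∀ n ≤ n₀, d n ≤ B := by
    intro n hn
    have : d n ≤ ∑ j ∈ Finset.range (n₀ + 1), d j :=
      Finset.single_le_sum (fun j _ => hd0 j) (Finset.mem_range.mpr (Nat.lt_succ_of_le hn))
    linarith
  refine ⟨B, ?_⟩
  intro n
  induction n using Nat.strong_induction_on with
  | _ n ih =>
    rcases le_or_gt n n₀ with h | h
    · exact hsmall n h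
    · obtain ⟨m, rfl⟩ : ∃ m, n = m + 1 := ⟨n - 1, by omega⟩
      have hm : n₀ ≤ m := by omega
      have hdB : ∀ j, j < m + 1 → d j ≤ B := fun j hj => ih j hj
      set P : ℝ := ∑ j ∈ Finset.range (m + 1), b (j + 1) with hP
      set Q : ℝ := ∑ j ∈ Finset.range (m + 1), (if N ≤ j then b (j + 1) else 0) with hQ
      have key : ((m : ℝ) + 1) * d (m + 1) ≤
          (N : ℝ) * B * P + ((m : ℝ) + 1) * B * Q := by
        rw [hP, hQ, hdrec m]
        have hbd : ∀ j ∈ Finset.range (m + 1),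
            ((m + 1 - j : ℕ) : ℝ) * b (m + 1 - j) * d j ≤
            (N : ℝ) * B * b (m + 1 - j) +
              ((m : ℝ) + 1) * B * (if N ≤ m - j then b (m + 1 - j) else 0) := by
          intro j hj
          have hjm : j ≤ m := Nat.lt_succ_iff.mp (Finset.mem_range.mp hj)
          have hdj : d j ≤ B := hdB j (Nat.lt_succ_of_le hjm)
          have hd0j := hd0 j
          have hb0' := hb0 (m + 1 - j)
          rcases le_or_gt (m + 1 - j) N with hk | hk
          · -- small k case
            have h1 : ((m + 1 - j : ℕ) : ℝ) ≤ (N : ℝ) := by exact_mod_cast hk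
            have hif : (0:ℝ) ≤ ((m : ℝ) + 1) * B * (if N ≤ m - j then b (m + 1 - j) else 0) := by
              have : (0:ℝ) ≤ (if N ≤ m - j then b (m + 1 - j) else 0) := by positivity
              positivity
            have : ((m + 1 - j : ℕ) : ℝ) * b (m + 1 - j) * d j ≤ (N : ℝ) * B * b (m + 1 - j) := by
              calc ((m + 1 - j : ℕ) : ℝ) * b (m + 1 - j) * d j
                  ≤ (N : ℝ) * b (m + 1 - j) * B := by
                    apply mul_le_mul (mul_le_mul_of_nonneg_right h1 hb0') hdj hd0j
                    positivity
                _ = (N : ℝ) * B * b (m + 1 - j) := by ring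
            linarith
          · -- large k case
            have hNle : N ≤ m - j := by omega
            rw [if_pos hNle]
            have h1 : ((m + 1 - j : ℕ) : ℝ) ≤ (m : ℝ) + 1 := by
              have : m + 1 - j ≤ m + 1 := by omega
              exact_mod_cast this
            have hfirst : (0:ℝ) ≤ (N : ℝ) * B * b (m + 1 - j) := by positivity
            have : ((m + 1 - j : ℕ) : ℝ) * b (m + 1 - j) * d j ≤
                ((m : ℝ) + 1) * B * b (m + 1 - j) := by
              calc ((m + 1 - j : ℕ) : ℝ) * b (m + 1 - j) * d j
                  ≤ ((m : ℝ) + 1) * b (m + 1 - j) * B := by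
                    apply mul_le_mul (mul_le_mul_of_nonneg_right h1 hb0') hdj hd0j
                    positivity
                _ = ((m : ℝ) + 1) * B * b (m + 1 - j) := by ring
            linarith
        calc ∑ j ∈ Finset.range (m + 1), ((m + 1 - j : ℕ) : ℝ) * b (m + 1 - j) * d j
            ≤ ∑ j ∈ Finset.range (m + 1), ((N : ℝ) * B * b (m + 1 - j) +
              ((m : ℝ) + 1) * B * (if N ≤ m - j then b (m + 1 - j) else 0)) :=
              Finset.sum_le_sum hbd
          _ = (N : ℝ) * B * (∑ j ∈ Finset.range (m + 1), b (m + 1 - j)) +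
              ((m : ℝ) + 1) * B *
                (∑ j ∈ Finset.range (m + 1), if N ≤ m - j then b (m + 1 - j) else 0) := by
              rw [Finset.sum_add_distrib, Finset.mul_sum, Finset.mul_sum]
          _ = (N : ℝ) * B * (∑ j ∈ Finset.range (m + 1), b (j + 1)) +
              ((m : ℝ) + 1) * B * (∑ j ∈ Finset.range (m + 1), if N ≤ j then b (j + 1) else 0) := by
              congr 1
              · congr 1
                have := Finset.sum_range_reflect (fun j => b (j + 1)) (m + 1)
                simp only [Nat.succ_sub_one] at this
                rw [← this]
                apply Finset.sum_congr rfl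
                intro j hj
                have hjm : j ≤ m := Nat.lt_succ_iff.mp (Finset.mem_range.mp hj)
                congr 1
                omega
              · congr 1
                have := Finset.sum_range_reflect (fun j => if N ≤ j then b (j + 1) else 0) (m + 1)
                simp only [Nat.succ_sub_one] at this
                rw [← this]
                apply Finset.sum_congr rfl
                intro j hj
                have hjm : j ≤ m := Nat.lt_succ_iff.mp (Finset.mem_range.mp hj)
                have h1 : m - j ≤ m := by omega
                have h2 : m + 1 - j = (m - j) + 1 := by omega
                rw [h2]
      -- bound the two sums
      have hsum1 : P ≤ S :=
        Summable.sum_le_tsum _ (fun j _ => hb0 _) hb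
      have hsum2 : Q ≤ ∑' k, b (k + N + 1) := by
        rw [hQ]
        have hsumh : Summable (fun j => if N ≤ j then b (j + 1) else 0) := by
          apply Summable.of_nonneg_of_le
            (fun j => by by_cases hj : N ≤ j <;> simp [hj, hb0])
            (fun j => by by_cases hj : N ≤ j <;> simp [hj, hb0]) hb
        have h1 : (∑ j ∈ Finset.range (m + 1), if N ≤ j then b (j + 1) else 0) ≤
            ∑' j, if N ≤ j then b (j + 1) else 0 :=
          Summable.sum_le_tsum _ (fun j _ => by by_cases hj : N ≤ j <;> simp [hj, hb0]) hsumh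
        have h2 : (∑' j, if N ≤ j then b (j + 1) else 0) = ∑' k, b (k + N + 1) := by
          rw [← Summable.sum_add_tsum_nat_add (f := fun j => if N ≤ j then b (j+1) else 0) N hsumh]
          have hz : (∑ j ∈ Finset.range N, if N ≤ j then b (j + 1) else 0) = 0 := by
            apply Finset.sum_eq_zero
            intro j hj
            rw [if_neg (by simpa using Finset.mem_range.mp hj |>.not_ge)]
          rw [hz, zero_add]
          apply tsum_congr
          intro k
          rw [if_pos (by omega)]
        linarith
      -- combine
      have hNS : (N : ℝ) * S ≤ ((m : ℝ) + 1) / 4 := by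
        have h1 : (4 : ℝ) * N * S ≤ n₀ := Nat.le_ceil _
        have h2 : (n₀ : ℝ) ≤ m := by exact_mod_cast hm
        linarith
      have e1 : (N : ℝ) * B * P ≤ ((m : ℝ) + 1) * B / 4 := by
          calc (N : ℝ) * B * P ≤ (N : ℝ) * B * S := by
                apply mul_le_mul_of_nonneg_left hsum1 (by positivity)
            _ = ((N : ℝ) * S) * B := by ring
            _ ≤ (((m : ℝ) + 1) / 4) * B := mul_le_mul_of_nonneg_right hNS (by linarith)
            _ = ((m : ℝ) + 1) * B / 4 := by ring
      have e2 : ((m : ℝ) + 1) * B * Q ≤ ((m : ℝ) + 1) * B / 4 := by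
          calc ((m : ℝ) + 1) * B * Q
              ≤ ((m : ℝ) + 1) * B * (1/4) := by
                apply mul_le_mul_of_nonneg_left (le_trans hsum2 hN) (by positivity)
            _ = ((m : ℝ) + 1) * B / 4 := by ring
      have hfinal : ((m : ℝ) + 1) * d (m + 1) ≤ ((m : ℝ) + 1) * B / 4 + ((m : ℝ) + 1) * B / 4 :=
        key.trans (add_le_add e1 e2)
      clear_value B P Q S
      have hm1 : (0:ℝ) < (m : ℝ) + 1 := by positivity
      have hmB : (0:ℝ) ≤ ((m : ℝ) + 1) * B := by positivity
      have h2 : ((m : ℝ) + 1) * d (m + 1) ≤ ((m : ℝ) + 1) * B := by linarith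
      exact le_of_mul_le_mul_left h2 hm1

lemma tsum_eq_exp_of_rec (α γ : ℕ → ℂ) (C : ℝ)
    (hγC : ∀ n, ‖γ n‖ ≤ C)
    (hα : Summable fun k => ‖α (k+1)‖)
    (hγ0 : γ 0 = 1)
    (hrec : ∀ n : ℕ, ((n : ℂ) + 1) * γ (n + 1) =
      ∑ j ∈ Finset.range (n + 1), ((n + 1 - j : ℕ) : ℂ) * α (n + 1 - j) * γ j)
    {t : ℝ} (ht0 : 0 ≤ t) (ht1 : t < 1) :
    ∑' n, γ n * (t : ℂ) ^ n = Complex.exp (∑' k, α (k + 1) * (t : ℂ) ^ (k + 1)) := by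
  set r : ℝ := (t + 1) / 2 with hrdef
  have hr0 : 0 < r := by simp only [hrdef]; linarith
  have hr1 : r < 1 := by simp only [hrdef]; linarith
  have htr : t < r := by simp only [hrdef]; linarith
  have hC0 : 0 ≤ C := le_trans (norm_nonneg _) (hγC 0)
  set A : ℝ := ∑' k, ‖α (k+1)‖ with hAdef
  have hAb : ∀ k, ‖α (k+1)‖ ≤ A := fun k => Summable.le_tsum hα k (fun _ _ => norm_nonneg _)
  have hA0 : 0 ≤ A := le_trans (norm_nonneg _) (hAb 0)
  -- the functions
  set g : ℕ → ℝ → ℂ := fun n s => γ n * (s : ℂ) ^ n with hgdef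
  set g' : ℕ → ℝ → ℂ := fun n s => γ n * (n : ℂ) * (s : ℂ) ^ (n - 1) with hg'def
  set h : ℕ → ℝ → ℂ := fun k s => α (k + 1) * (s : ℂ) ^ (k + 1) with hhdef
  set h' : ℕ → ℝ → ℂ := fun k s => α (k + 1) * ((k : ℂ) + 1) * (s : ℂ) ^ k with hh'def
  have habs : ∀ (s : ℝ) (n : ℕ), ‖(s:ℂ)^n‖ = |s|^n := by
    intro s n
    rw [norm_pow, Complex.norm_real, Real.norm_eq_abs]
  -- derivatives
  have hder_g : ∀ (n : ℕ) (s : ℝ), HasDerivAt (g n) (g' n s) s := by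
    intro n s
    have h1 : HasDerivAt (fun z : ℂ => γ n * z ^ n) (γ n * ((n : ℂ) * (s:ℂ) ^ (n-1))) (s:ℂ) :=
      (hasDerivAt_pow n (s:ℂ)).const_mul (γ n)
    have h2 := h1.comp_ofReal
    simpa [hgdef, hg'def, mul_assoc] using h2
  have hder_h : ∀ (k : ℕ) (s : ℝ), HasDerivAt (h k) (h' k s) s := by
    intro k s
    have h1 : HasDerivAt (fun z : ℂ => α (k+1) * z ^ (k+1))
        (α (k+1) * (((k:ℂ) + 1) * (s:ℂ) ^ k)) (s:ℂ) := by
      have := (hasDerivAt_pow (k+1) (s:ℂ)).const_mul (α (k+1))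
      simpa [Nat.add_sub_cancel] using this
    have h2 := h1.comp_ofReal
    simpa [hhdef, hh'def, mul_assoc] using h2
  -- summable bounds on derivatives
  have hu : Summable (fun n : ℕ => C * n * r ^ (n - 1)) := by
    rw [← summable_nat_add_iff 1]
    have : (fun n : ℕ => C * (n + 1) * r ^ n) = fun n : ℕ => C * ((n + 1) * r ^ n) := by
      ext n; push_cast; ring
    have h2 : Summable (fun n : ℕ => ((n:ℝ) + 1) * r ^ n) := by
      have ha := summable_pow_mul_geometric_of_norm_lt_one 1 (by
        rw [Real.norm_eq_abs, abs_of_pos hr0]; exact hr1) (R := ℝ)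
      have hb := summable_geometric_of_lt_one (le_of_lt hr0) hr1
      exact (ha.add hb).congr (fun n => by push_cast [pow_one]; ring)
    simpa [this, Nat.add_sub_cancel, push_cast] using h2.mul_left C
  have hv : Summable (fun k : ℕ => A * (k + 1) * r ^ k) := by
    have h2 : Summable (fun n : ℕ => ((n:ℝ) + 1) * r ^ n) := by
      have ha := summable_pow_mul_geometric_of_norm_lt_one 1 (by
        rw [Real.norm_eq_abs, abs_of_pos hr0]; exact hr1) (R := ℝ)
      have hb := summable_geometric_of_lt_one (le_of_lt hr0) hr1
      exact (ha.add hb).congr (fun n => by push_cast [pow_one]; ring)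
    have := h2.mul_left A
    simpa [mul_assoc] using this
  have hbnd_g' : ∀ (n : ℕ) (s : ℝ), s ∈ Ioo (-r) r → ‖g' n s‖ ≤ C * n * r ^ (n - 1) := by
    intro n s hs
    have hsr : |s| ≤ r := by
      rw [abs_le]; exact ⟨le_of_lt hs.1, le_of_lt hs.2⟩
    simp only [hg'def, norm_mul, Complex.norm_natCast, habs]
    have h1 : |s| ^ (n - 1) ≤ r ^ (n - 1) := pow_le_pow_left₀ (abs_nonneg _) hsr _
    have h2 : ‖γ n‖ * (n:ℝ) ≤ C * n := mul_le_mul_of_nonneg_right (hγC n) (Nat.cast_nonneg n)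
    calc ‖γ n‖ * (n:ℝ) * |s| ^ (n-1) ≤ (C * n) * r ^ (n-1) := by
          apply mul_le_mul h2 h1 (by positivity) (by positivity)
      _ = C * n * r ^ (n-1) := by ring
  have hbnd_h' : ∀ (k : ℕ) (s : ℝ), s ∈ Ioo (-r) r → ‖h' k s‖ ≤ A * (k + 1) * r ^ k := by
    intro k s hs
    have hsr : |s| ≤ r := by
      rw [abs_le]; exact ⟨le_of_lt hs.1, le_of_lt hs.2⟩
    simp only [hh'def, norm_mul, habs]
    have hnk : ‖(k:ℂ) + 1‖ = (k:ℝ) + 1 := by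
      have : ((k:ℂ) + 1) = ((k + 1 : ℕ) : ℂ) := by push_cast; ring
      rw [this, Complex.norm_natCast]; push_cast; ring
    rw [hnk]
    have h1 : |s| ^ k ≤ r ^ k := pow_le_pow_left₀ (abs_nonneg _) hsr _
    have h2 : ‖α (k+1)‖ * ((k:ℝ)+1) ≤ A * ((k:ℝ)+1) :=
      mul_le_mul_of_nonneg_right (hAb k) (by positivity)
    calc ‖α (k+1)‖ * ((k:ℝ)+1) * |s| ^ k ≤ (A * ((k:ℝ)+1)) * r ^ k := by
          apply mul_le_mul h2 h1 (by positivity) (by positivity)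
      _ = A * ((k:ℝ)+1) * r ^ k := by ring
  have h0mem : (0:ℝ) ∈ Ioo (-r) r := ⟨by linarith, hr0⟩
  have htmem : t ∈ Ioo (-r) r := ⟨by linarith, htr⟩
  -- summability at 0
  have hg0sum : Summable (fun n => g n 0) := by
    apply summable_of_ne_finset_zero (s := {0})
    intro n hn
    have hn0 : n ≠ 0 := by simpa using hn
    simp [hgdef, zero_pow hn0]
  have hh0sum : Summable (fun k => h k 0) := by
    apply summable_of_ne_finset_zero (s := (∅ : Finset ℕ))
    intro k _
    simp [hhdef]
  -- derivative of the two sums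
  have HG : ∀ s ∈ Ioo (-r) r,
      HasDerivAt (fun y => ∑' n, g n y) (∑' n, g' n s) s := by
    intro s hs
    exact hasDerivAt_tsum_of_isPreconnected hu isOpen_Ioo isPreconnected_Ioo
      (fun n y hy => hder_g n y) hbnd_g' h0mem hg0sum hs
  have HH : ∀ s ∈ Ioo (-r) r,
      HasDerivAt (fun y => ∑' k, h k y) (∑' k, h' k s) s := by
    intro s hs
    exact hasDerivAt_tsum_of_isPreconnected hv isOpen_Ioo isPreconnected_Ioo
      (fun k y hy => hder_h k y) hbnd_h' h0mem hh0sum hs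
  -- norm summability of g and h' at points of Ioo
  have hsum_g : ∀ s ∈ Ioo (-r) r, Summable (fun n => ‖g n s‖) := by
    intro s hs
    have hsr : |s| ≤ r := by rw [abs_le]; exact ⟨le_of_lt hs.1, le_of_lt hs.2⟩
    apply Summable.of_nonneg_of_le (fun n => norm_nonneg _)
      (fun n => ?_) (((summable_geometric_of_lt_one (le_of_lt hr0) hr1)).mul_left C)
    simp only [hgdef, norm_mul, habs]
    apply mul_le_mul (hγC n) (pow_le_pow_left₀ (abs_nonneg _) hsr _) (by positivity) hC0
  have hsum_h' : ∀ s ∈ Ioo (-r) r, Summable (fun k => ‖h' k s‖) := by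
    intro s hs
    exact Summable.of_nonneg_of_le (fun k => norm_nonneg _) (fun k => hbnd_h' k s hs) hv
  have hsum_g' : ∀ s ∈ Ioo (-r) r, Summable (fun n => ‖g' n s‖) := by
    intro s hs
    exact Summable.of_nonneg_of_le (fun n => norm_nonneg _) (fun n => hbnd_g' n s hs) hu
  -- the key Cauchy-product identity
  have key : ∀ s ∈ Ioo (-r) r, (∑' n, g' n s) = (∑' k, h' k s) * (∑' n, g n s) := by
    intro s hs
    rw [tsum_mul_tsum_eq_tsum_sum_range_of_summable_norm (hsum_h' s hs) (hsum_g s hs)]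
    have hz : g' 0 s = 0 := by simp [hg'def]
    rw [Summable.tsum_eq_zero_add ((hsum_g' s hs).of_norm)]
    rw [hz, zero_add]
    apply tsum_congr
    intro n
    -- g' (n+1) s = ∑ k ∈ range (n+1), h' k s * g (n-k) s
    have e1 : g' (n+1) s = (((n:ℂ)+1) * γ (n+1)) * (s:ℂ)^n := by
      simp only [hg'def, Nat.add_sub_cancel]
      push_cast
      ring
    rw [e1, hrec n]
    rw [Finset.sum_mul]
    rw [← Finset.sum_range_reflect (fun j => ((n + 1 - j : ℕ) : ℂ) * α (n + 1 - j) * γ j * (s:ℂ)^n) (n+1)]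
    apply Finset.sum_congr rfl
    intro k hk
    have hkn : k ≤ n := Nat.lt_succ_iff.mp (Finset.mem_range.mp hk)
    have e2 : n + 1 - (n - k) = k + 1 := by omega
    have e3 : n - (n - k)= k := by omega
    simp only [Nat.succ_sub_one, e2, e3]
    have e4 : (s:ℂ)^n = (s:ℂ)^k * (s:ℂ)^(n-k) := by
      rw [← pow_add]
      congr 1
      omega
    rw [e4]
    simp only [hh'def, hgdef]
    push_cast
    ring
  -- the function W and its derivative
  set G : ℝ → ℂ := fun s => ∑' n, g n s with hGdef
  set H : ℝ → ℂ := fun s => ∑' k, h k s with hHdef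
  set W : ℝ → ℂ := fun s => G s * Complex.exp (-(H s)) with hWdef
  have HW : ∀ s ∈ Ioo (-r) r, HasDerivAt W 0 s := by
    intro s hs
    have h1 : HasDerivAt (fun y => Complex.exp (-(H y)))
        (Complex.exp (-(H s)) * (-(∑' k, h' k s))) s := ((HH s hs).neg).cexp
    have h2 := (HG s hs).mul h1
    have : (∑' n, g' n s) * Complex.exp (-(H s)) +
        G s * (Complex.exp (-(H s)) * (-(∑' k, h' k s))) = 0 := by
      rw [key s hs]
      ring
    rw [this] at h2
    exact h2
  -- W is constant on [0, t]
  have hsub : Icc (0:ℝ) t ⊆ Ioo (-r) r := by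
    intro x hx
    exact ⟨by linarith [hx.1], by linarith [hx.2]⟩
  have hWt : W t = W 0 := by
    apply constant_of_has_deriv_right_zero (f := W) (a := 0) (b := t)
    · intro x hx
      exact ((HW x (hsub hx)).continuousAt).continuousWithinAt
    · intro x hx
      exact (HW x (hsub ⟨hx.1, le_of_lt hx.2⟩)).hasDerivWithinAt
    · exact ⟨ht0, le_refl t⟩
  -- compute W 0
  have hG0 : G 0 = 1 := by
    rw [hGdef]
    simp only
    rw [tsum_eq_single 0 (fun n hn => by simp [hgdef, zero_pow hn])]
    simp [hgdef, hγ0]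
  have hH0 : H 0 = 0 := by
    rw [hHdef]
    simp only
    have : ∀ k : ℕ, h k 0 = 0 := fun k => by simp [hhdef]
    rw [tsum_congr this]
    exact tsum_zero
  have hW0 : W 0 = 1 := by
    rw [hWdef]; simp only; rw [hG0, hH0]; simp
  -- conclude
  have hWt1 : G t * Complex.exp (-(H t)) = 1 := by
    rw [← hW0]; exact hWt
  have : G t = Complex.exp (H t) := by
    have hne : Complex.exp (-(H t)) ≠ 0 := Complex.exp_ne_zero _
    rw [Complex.exp_neg, ← div_eq_mul_inv, div_eq_one_iff_eq (Complex.exp_ne_zero _)] at hWt1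
    rw [← hWt1]
  exact this

lemma neBot_aux : (𝓝[Ioo (0:ℝ) 1] (1:ℝ)).NeBot := by
  apply mem_closure_iff_nhdsWithin_neBot.mp
  rw [closure_Ioo (by norm_num : (0:ℝ) ≠ 1)]
  exact ⟨by norm_num, le_refl 1⟩

lemma tsum_eq_exp_boundary (α γ : ℕ → ℂ) (C : ℝ)
    (hγC : ∀ n, ‖γ n‖ ≤ C)
    (hα : Summable fun k => ‖α (k+1)‖)
    (hγ0 : γ 0 = 1)
    (hrec : ∀ n : ℕ, ((n : ℂ) + 1) * γ (n + 1) =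
      ∑ j ∈ Finset.range (n + 1), ((n + 1 - j : ℕ) : ℂ) * α (n + 1 - j) * γ j)
    (hγsum : Summable fun n => ‖γ n‖) :
    ∑' n, γ n = Complex.exp (∑' k, α (k + 1)) := by
  haveI : (𝓝[Ioo (0:ℝ) 1] (1:ℝ)).NeBot := neBot_aux
  set l : Filter ℝ := 𝓝[Ioo (0:ℝ) 1] (1:ℝ) with hldef
  have hmem : ∀ᶠ t in l, t ∈ Ioo (0:ℝ) 1 := eventually_mem_nhdsWithin
  have limit1 : Tendsto (fun t : ℝ => ∑' n, γ n * (t:ℂ)^n) l (𝓝 (∑' n, γ n)) := by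
    apply tendsto_tsum_of_dominated_convergence hγsum
    · intro n
      have hcont : Continuous (fun t : ℝ => γ n * (t:ℂ)^n) := by
        apply Continuous.mul continuous_const
        exact (continuous_pow n).comp Complex.continuous_ofReal
      have := (hcont.tendsto 1).mono_left (nhdsWithin_le_nhds (s := Ioo (0:ℝ) 1))
      simp only [Complex.ofReal_one, one_pow, mul_one] at this
      exact this
    · filter_upwards [hmem] with t ht
      intro n
      rw [norm_mul, norm_pow, Complex.norm_real, Real.norm_eq_abs,
        abs_of_pos ht.1]
      have h1 : t ^ n ≤ 1 := pow_le_one₀ (le_of_lt ht.1) (le_of_lt ht.2)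
      have h2 : (0:ℝ) ≤ t ^ n := le_of_lt (pow_pos ht.1 n)
      nlinarith [norm_nonneg (γ n)]
  have limit2 : Tendsto (fun t : ℝ => Complex.exp (∑' k, α (k+1) * (t:ℂ)^(k+1))) l
      (𝓝 (Complex.exp (∑' k, α (k + 1)))) := by
    have inner : Tendsto (fun t : ℝ => ∑' k, α (k+1) * (t:ℂ)^(k+1)) l
        (𝓝 (∑' k, α (k + 1))) := by
      apply tendsto_tsum_of_dominated_convergence hα
      · intro k
        have hcont : Continuous (fun t : ℝ => α (k+1) * (t:ℂ)^(k+1)) := by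
          apply Continuous.mul continuous_const
          exact (continuous_pow (k+1)).comp Complex.continuous_ofReal
        have := (hcont.tendsto 1).mono_left (nhdsWithin_le_nhds (s := Ioo (0:ℝ) 1))
        simp only [Complex.ofReal_one, one_pow, mul_one] at this
        exact this
      · filter_upwards [hmem] with t ht
        intro k
        rw [norm_mul, norm_pow, Complex.norm_real, Real.norm_eq_abs, abs_of_pos ht.1]
        have h1 : t ^ (k+1) ≤ 1 := pow_le_one₀ (le_of_lt ht.1) (le_of_lt ht.2)
        have h2 : (0:ℝ) ≤ t ^ (k+1) := le_of_lt (pow_pos ht.1 (k+1))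
        nlinarith [norm_nonneg (α (k+1))]
    exact (Complex.continuous_exp.tendsto _).comp inner
  have hev : (fun t : ℝ => ∑' n, γ n * (t:ℂ)^n) =ᶠ[l]
      (fun t : ℝ => Complex.exp (∑' k, α (k+1) * (t:ℂ)^(k+1))) := by
    filter_upwards [hmem] with t ht
    exact tsum_eq_exp_of_rec α γ C hγC hα hγ0 hrec (le_of_lt ht.1) ht.2
  exact tendsto_nhds_unique (limit1.congr' hev) limit2

-- complex recursion for γ n = c n * z ^ n
lemma crec_complex {a c : ℕ → ℝ} (hc : IsMARecR a c) (z : ℂ) (n : ℕ) :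
    ((n : ℂ) + 1) * ((c (n+1) : ℂ) * z ^ (n+1)) =
      ∑ j ∈ Finset.range (n + 1), ((n + 1 - j : ℕ) : ℂ) *
        ((a (n + 1 - j) : ℂ) * z ^ (n + 1 - j)) * ((c j : ℂ) * z ^ j) := by
  have hreal := marec_deriv_form hc n
  have hℂ : ((n:ℂ)+1) * (c (n+1) : ℂ) =
      ∑ j ∈ Finset.range (n + 1), ((n + 1 - j : ℕ) : ℂ) * (a (n + 1 - j) : ℂ) * (c j : ℂ) := by
    have := congrArg (Complex.ofReal) hreal
    push_cast at this
    exact this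
  calc ((n : ℂ) + 1) * ((c (n+1) : ℂ) * z ^ (n+1))
      = (((n:ℂ)+1) * (c (n+1) : ℂ)) * z ^ (n+1) := by ring
    _ = (∑ j ∈ Finset.range (n + 1),
          ((n + 1 - j : ℕ) : ℂ) * (a (n + 1 - j) : ℂ) * (c j : ℂ)) * z ^ (n+1) := by rw [hℂ]
    _ = ∑ j ∈ Finset.range (n + 1),
          ((n + 1 - j : ℕ) : ℂ) * (a (n + 1 - j) : ℂ) * (c j : ℂ) * z ^ (n+1) :=
        Finset.sum_mul _ _ _
    _ = _ := by
        apply Finset.sum_congr rfl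
        intro j hj
        have hjn : j ≤ n := Nat.lt_succ_iff.mp (Finset.mem_range.mp hj)
        have hzz : z ^ (n+1) = z ^ (n+1-j) * z ^ j := by
          rw [← pow_add]; congr 1; omega
        rw [hzz]; ring

lemma summable_abs_of_rec {a c : ℕ → ℝ} (ha : Summable fun k : ℕ => |a (k + 1)|)
    (hc : IsMARecR a c) : Summable (fun n => |c n|) := by
  set b : ℕ → ℝ := fun k => |a k| with hbdef
  set d : ℕ → ℝ := maRec b with hddef
  have hd : IsMARecR b d := isMARecR_maRec b
  have hb0 : ∀ k, 0 ≤ b k := fun k => abs_nonneg _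
  have hd0 : ∀ n, 0 ≤ d n := maRec_nonneg b hb0
  have hcd : ∀ n, |c n| ≤ d n := abs_le_maRec hc
  have hbsum : Summable fun k => b (k+1) := ha
  obtain ⟨C, hC⟩ := maRec_bounded b hb0 hbsum d hd0 (marec_deriv_form hd)
  set S : ℝ := ∑' k, b (k+1) with hSdef
  have hS0 : 0 ≤ S := tsum_nonneg (fun k => hb0 _)
  -- the identity for t ∈ [0,1)
  have key : ∀ t : ℝ, 0 ≤ t → t < 1 →
      ∑' n, d n * t ^ n = Real.exp (∑' k, b (k+1) * t ^ (k+1)) := by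
    intro t ht0 ht1
    have hcx := tsum_eq_exp_of_rec (fun k => (b k : ℂ)) (fun n => (d n : ℂ)) C
      (fun n => by rw [Complex.norm_real, Real.norm_eq_abs, abs_of_nonneg (hd0 n)]; exact hC n)
      (by simpa [Complex.norm_real, Real.norm_eq_abs, abs_of_nonneg (hb0 _)] using hbsum)
      (show ((d 0 : ℝ) : ℂ) = 1 by rw [hd.1]; norm_num)
      (fun n => by
        have := marec_deriv_form hd n
        have h2 := congrArg (Complex.ofReal) this
        push_cast at h2
        convert h2 using 2 <;> push_cast <;> ring)
      ht0 ht1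
    have hL : ∑' n, ((d n : ℂ)) * (t:ℂ)^n = ((∑' n, d n * t ^ n : ℝ) : ℂ) := by
      rw [Complex.ofReal_tsum]
      apply tsum_congr; intro n; push_cast; ring
    have hR : Complex.exp (∑' k, ((b (k+1) : ℂ)) * (t:ℂ)^(k+1)) =
        ((Real.exp (∑' k, b (k+1) * t ^ (k+1)) : ℝ) : ℂ) := by
      rw [Complex.ofReal_exp, Complex.ofReal_tsum]
      congr 1
      apply tsum_congr; intro k; push_cast; ring
    rw [hL, hR] at hcx
    exact_mod_cast hcx
  -- partial sums of d are bounded by exp S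
  have hpart : ∀ K : ℕ, ∑ n ∈ Finset.range K, d n ≤ Real.exp S := by
    intro K
    haveI : (𝓝[Ioo (0:ℝ) 1] (1:ℝ)).NeBot := neBot_aux
    set l : Filter ℝ := 𝓝[Ioo (0:ℝ) 1] (1:ℝ)
    have hmem : ∀ᶠ t in l, t ∈ Ioo (0:ℝ) 1 := eventually_mem_nhdsWithin
    have hcont : Tendsto (fun t : ℝ => ∑ n ∈ Finset.range K, d n * t ^ n) l
        (𝓝 (∑ n ∈ Finset.range K, d n)) := by
      have hc2 : Continuous (fun t : ℝ => ∑ n ∈ Finset.range K, d n * t ^ n) := by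
        apply continuous_finset_sum
        intro n _
        exact continuous_const.mul (continuous_pow n)
      have := (hc2.tendsto 1).mono_left (nhdsWithin_le_nhds (s := Ioo (0:ℝ) 1))
      simp only [one_pow, mul_one] at this
      exact this
    apply le_of_tendsto hcont
    filter_upwards [hmem] with t ht
    have hsum_dt : Summable (fun n => d n * t ^ n) := by
      apply Summable.of_nonneg_of_le
        (fun n => mul_nonneg (hd0 n) (le_of_lt (pow_pos ht.1 n)))
        (fun n => ?_)
        ((summable_geometric_of_lt_one (le_of_lt ht.1) ht.2).mul_left C)
      exact mul_le_mul_of_nonneg_right (hC n) (le_of_lt (pow_pos ht.1 n))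
    have h1 : ∑ n ∈ Finset.range K, d n * t ^ n ≤ ∑' n, d n * t ^ n :=
      Summable.sum_le_tsum _ (fun n _ => mul_nonneg (hd0 n) (le_of_lt (pow_pos ht.1 n))) hsum_dt
    have h2 : ∑' n, d n * t ^ n ≤ Real.exp S := by
      rw [key t (le_of_lt ht.1) ht.2]
      apply Real.exp_le_exp.mpr
      have hle : ∀ k : ℕ, b (k+1) * t ^ (k+1) ≤ b (k+1) := by
        intro k
        have hp1 : t ^ (k+1) ≤ 1 := pow_le_one₀ (le_of_lt ht.1) (le_of_lt ht.2)
        have hp0 : (0:ℝ) ≤ t ^ (k+1) := le_of_lt (pow_pos ht.1 (k+1))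
        nlinarith [hb0 (k+1)]
      have hsumb' : Summable (fun k : ℕ => b (k+1) * t ^ (k+1)) :=
        Summable.of_nonneg_of_le
          (fun k => mul_nonneg (hb0 _) (le_of_lt (pow_pos ht.1 _))) hle hbsum
      exact Summable.tsum_le_tsum hle hsumb' hbsum
    linarith
  have hdsum : Summable d := summable_of_sum_range_le hd0 hpart
  exact Summable.of_nonneg_of_le (fun n => abs_nonneg _) hcd hdsum

-- boundary identity for the original sequence
lemma tsum_c_mul_exp {a c : ℕ → ℝ} (ha : Summable fun k : ℕ => |a (k + 1)|)
    (hc : IsMARecR a c) (z : ℂ) (hz : ‖z‖ = 1) :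
    ∑' n, (c n : ℂ) * z ^ n = Complex.exp (∑' k, (a (k+1) : ℂ) * z ^ (k+1)) := by
  have habs := summable_abs_of_rec ha hc
  have hγsum : Summable (fun n => ‖(c n : ℂ) * z ^ n‖) := by
    apply Summable.congr habs
    intro n
    rw [norm_mul, norm_pow, hz, one_pow, mul_one, Complex.norm_real, Real.norm_eq_abs]
  have hγC : ∀ n, ‖(c n : ℂ) * z ^ n‖ ≤ ∑' m, |c m| := by
    intro n
    rw [norm_mul, norm_pow, hz, one_pow, mul_one, Complex.norm_real, Real.norm_eq_abs]
    exact Summable.le_tsum habs n (fun _ _ => abs_nonneg _)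
  exact tsum_eq_exp_boundary (fun k => (a k : ℂ) * z ^ k) (fun n => (c n : ℂ) * z ^ n) _
    hγC
    (by apply Summable.congr ha; intro k
        rw [norm_mul, norm_pow, hz, one_pow, mul_one, Complex.norm_real, Real.norm_eq_abs])
    (by simp [hc.1])
    (fun n => crec_complex hc z n)
    hγsum

lemma normSq_sub_exp (s t : ℝ) (W1 W2 : ℂ) :
    Complex.normSq ((s : ℂ) * Complex.exp W1 - (t : ℂ) * Complex.exp W2) =
      s^2 * Real.exp (2 * W1.re) + t^2 * Real.exp (2 * W2.re)
        - 2 * (s * t) * (Real.exp (W1.re + W2.re) * Real.cos (W1.im - W2.im)) := by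
  rw [Complex.normSq_sub, Complex.normSq_mul, Complex.normSq_mul,
    Complex.normSq_ofReal, Complex.normSq_ofReal]
  have he : ∀ W : ℂ, Complex.normSq (Complex.exp W) = Real.exp (2 * W.re) := by
    intro W
    rw [Complex.normSq_eq_norm_sq, Complex.norm_exp, ← Real.exp_nat_mul]
    norm_num
  rw [he, he]
  have hcross : ((s : ℂ) * Complex.exp W1 * (starRingEnd ℂ) ((t : ℂ) * Complex.exp W2)).re
      = s * t * (Real.exp (W1.re + W2.re) * Real.cos (W1.im - W2.im)) := by
    rw [map_mul, Complex.conj_ofReal, ← Complex.exp_conj]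
    have h1 : (s : ℂ) * Complex.exp W1 * ((t : ℂ) * Complex.exp ((starRingEnd ℂ) W2)) =
        ((s * t : ℝ) : ℂ) * Complex.exp (W1 + (starRingEnd ℂ) W2) := by
      rw [Complex.exp_add]; push_cast; ring
    rw [h1, Complex.re_ofReal_mul, Complex.exp_re]
    simp only [Complex.add_re, Complex.conj_re, Complex.add_im, Complex.conj_im]
    ring_nf
  rw [hcross]
  ring


end AuxiliaryMAProof

/-- For absolutely summable cepstral coefficients `(a_k)`, `(â_k)` with associated spectral
densities `f, f̂`, innovation scales `σ, σ̂` and Wold coefficients `(c_k), (ĉ_k)` obtained by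
the MA recursion,
`∑_{k=0}^∞ (σ c_k - σ̂ ĉ_k)²
   = ∫₀^{2π} [f(λ) + f̂(λ) - 2 √(f(λ) f̂(λ)) cos (∑_{k ≥ 1} (a_k - â_k) sin (kλ))] dλ`,
both sides being finite. -/
theorem statement6 (a0 ahat0 : ℝ) (a ahat : ℕ → ℝ)
    (ha : Summable fun k : ℕ => |a (k + 1)|)
    (hahat : Summable fun k : ℕ => |ahat (k + 1)|)
    (c chat : ℕ → ℝ) (hc : IsMARecR a c) (hchat : IsMARecR ahat chat) :
    Summable (fun k : ℕ => (sigmaOf a0 * c k - sigmaOf ahat0 * chat k) ^ 2) ∧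
    ∑' k : ℕ, (sigmaOf a0 * c k - sigmaOf ahat0 * chat k) ^ 2 =
      ∫ x in (0:ℝ)..(2 * Real.pi),
        (expSpec a0 a x + expSpec ahat0 ahat x -
          2 * Real.sqrt (expSpec a0 a x * expSpec ahat0 ahat x) *
            Real.cos (∑' k : ℕ, (a (k + 1) - ahat (k + 1)) * Real.sin (((k : ℝ) + 1) * x))) := by
  have hπ : 0 < Real.pi := Real.pi_pos
  set σ1 : ℝ := sigmaOf a0 with hσ1def
  set σ2 : ℝ := sigmaOf ahat0 with hσ2def
  have hσ1 : 0 ≤ σ1 := Real.sqrt_nonneg _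
  have hσ2 : 0 ≤ σ2 := Real.sqrt_nonneg _
  have hσ1sq : σ1 ^ 2 = 2 * Real.pi * Real.exp a0 := Real.sq_sqrt (by positivity)
  have hσ2sq : σ2 ^ 2 = 2 * Real.pi * Real.exp ahat0 := Real.sq_sqrt (by positivity)
  have hσσ : σ1 * σ2 = 2 * Real.pi * Real.exp ((a0 + ahat0)/2) := by
    rw [hσ1def, hσ2def, sigmaOf, sigmaOf, ← Real.sqrt_mul (by positivity)]
    have h1 : 2 * Real.pi * Real.exp a0 * (2 * Real.pi * Real.exp ahat0) =
        (2 * Real.pi * Real.exp ((a0 + ahat0)/2))^2 := by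
      have h2 : Real.exp a0 * Real.exp ahat0 = Real.exp ((a0 + ahat0)/2) *
          Real.exp ((a0 + ahat0)/2) := by
        rw [← Real.exp_add, ← Real.exp_add]; congr 1; ring
      rw [pow_two, show 2 * Real.pi * Real.exp ((a0 + ahat0)/2) *
        (2 * Real.pi * Real.exp ((a0 + ahat0)/2)) = 2 * Real.pi * (2 * Real.pi) *
        (Real.exp ((a0 + ahat0)/2) * Real.exp ((a0 + ahat0)/2)) from by ring, ← h2]
      ring
    rw [h1, Real.sqrt_sq (by positivity)]
  set u : ℕ → ℝ := fun n => σ1 * c n - σ2 * chat n with hudef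
  have hca := summable_abs_of_rec ha hc
  have hcahat := summable_abs_of_rec hahat hchat
  have habs_u : Summable (fun n => |u n|) := by
    apply Summable.of_nonneg_of_le (fun n => abs_nonneg _) (fun n => ?_)
      ((hca.mul_left σ1).add (hcahat.mul_left σ2))
    calc |u n| ≤ |σ1 * c n| + |σ2 * chat n| := abs_sub _ _
      _ = σ1 * |c n| + σ2 * |chat n| := by
          rw [abs_mul, abs_mul, abs_of_nonneg hσ1, abs_of_nonneg hσ2]
  have hsq : Summable (fun k : ℕ => u k ^ 2) := by
    apply Summable.of_nonneg_of_le (fun n => sq_nonneg _) (fun n => ?_)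
      (habs_u.mul_left (∑' n, |u n|))
    have h1 : |u n| ≤ ∑' n, |u n| := Summable.le_tsum habs_u n (fun _ _ => abs_nonneg _)
    calc u n ^ 2 = |u n| * |u n| := by rw [← sq_abs, sq]
      _ ≤ (∑' n, |u n|) * |u n| := mul_le_mul_of_nonneg_right h1 (abs_nonneg _)
  refine ⟨hsq, ?_⟩
  -- complex exponentials
  set z : ℝ → ℂ := fun x => Complex.exp ((x : ℂ) * Complex.I) with hzdef
  have hznorm : ∀ x : ℝ, ‖z x‖ = 1 := by
    intro x
    rw [hzdef]
    exact Complex.norm_exp_ofReal_mul_I x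
  have hzpow : ∀ (x : ℝ) (n : ℕ), (z x) ^ n =
      Complex.exp ((((n : ℝ) * x : ℝ) : ℂ) * Complex.I) := by
    intro x n
    rw [hzdef]
    simp only
    rw [← Complex.exp_nat_mul]
    congr 1
    push_cast
    ring
  -- summability of complex series
  have hsumz : ∀ (v : ℕ → ℝ), Summable (fun n => |v n|) → ∀ x : ℝ,
      Summable (fun n => ‖(v n : ℂ) * (z x) ^ n‖) := by
    intro v hv x
    apply Summable.congr hv
    intro n
    rw [norm_mul, norm_pow, hznorm x, one_pow, mul_one, Complex.norm_real, Real.norm_eq_abs]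
  have hsuma : ∀ x : ℝ, Summable (fun k => ‖(a (k+1) : ℂ) * (z x) ^ (k+1)‖) := by
    intro x
    apply Summable.congr ha
    intro k
    rw [norm_mul, norm_pow, hznorm x, one_pow, mul_one, Complex.norm_real, Real.norm_eq_abs]
  have hsumahat : ∀ x : ℝ, Summable (fun k => ‖(ahat (k+1) : ℂ) * (z x) ^ (k+1)‖) := by
    intro x
    apply Summable.congr hahat
    intro k
    rw [norm_mul, norm_pow, hznorm x, one_pow, mul_one, Complex.norm_real, Real.norm_eq_abs]
  -- re and im of the inner sums
  have hre : ∀ x : ℝ, (∑' k, (a (k+1) : ℂ) * (z x) ^ (k+1)).re =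
      ∑' k : ℕ, a (k + 1) * Real.cos (((k : ℝ) + 1) * x) := by
    intro x
    rw [Complex.re_tsum ((hsuma x).of_norm)]
    apply tsum_congr
    intro k
    rw [hzpow, Complex.re_ofReal_mul, Complex.exp_ofReal_mul_I_re]
    congr 2
    push_cast
    ring
  have him : ∀ x : ℝ, (∑' k, (a (k+1) : ℂ) * (z x) ^ (k+1)).im =
      ∑' k : ℕ, a (k + 1) * Real.sin (((k : ℝ) + 1) * x) := by
    intro x
    rw [Complex.im_tsum ((hsuma x).of_norm)]
    apply tsum_congr
    intro k
    rw [hzpow, Complex.im_ofReal_mul, Complex.exp_ofReal_mul_I_im]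
    congr 2
    push_cast
    ring
  have hre2 : ∀ x : ℝ, (∑' k, (ahat (k+1) : ℂ) * (z x) ^ (k+1)).re =
      ∑' k : ℕ, ahat (k + 1) * Real.cos (((k : ℝ) + 1) * x) := by
    intro x
    rw [Complex.re_tsum ((hsumahat x).of_norm)]
    apply tsum_congr
    intro k
    rw [hzpow, Complex.re_ofReal_mul, Complex.exp_ofReal_mul_I_re]
    congr 2
    push_cast
    ring
  have him2 : ∀ x : ℝ, (∑' k, (ahat (k+1) : ℂ) * (z x) ^ (k+1)).im =
      ∑' k : ℕ, ahat (k + 1) * Real.sin (((k : ℝ) + 1) * x) := by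
    intro x
    rw [Complex.im_tsum ((hsumahat x).of_norm)]
    apply tsum_congr
    intro k
    rw [hzpow, Complex.im_ofReal_mul, Complex.exp_ofReal_mul_I_im]
    congr 2
    push_cast
    ring
  -- step A
  have stepA : ∀ x : ℝ, ∑' n, (u n : ℂ) * (z x) ^ n =
      (σ1 : ℂ) * Complex.exp (∑' k, (a (k+1) : ℂ) * (z x) ^ (k+1)) -
      (σ2 : ℂ) * Complex.exp (∑' k, (ahat (k+1) : ℂ) * (z x) ^ (k+1)) := by
    intro x
    have h1 : ∀ n : ℕ, (u n : ℂ) * (z x) ^ n =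
        (σ1 : ℂ) * ((c n : ℂ) * (z x) ^ n) - (σ2 : ℂ) * ((chat n : ℂ) * (z x) ^ n) := by
      intro n
      rw [hudef]
      push_cast
      ring
    rw [tsum_congr h1, Summable.tsum_sub (((hsumz c hca x).of_norm).mul_left _)
      (((hsumz chat hcahat x).of_norm).mul_left _), tsum_mul_left, tsum_mul_left,
      tsum_c_mul_exp ha hc (z x) (hznorm x), tsum_c_mul_exp hahat hchat (z x) (hznorm x)]
  -- step B : pointwise integrand identity
  have stepB : ∀ x : ℝ,
      expSpec a0 a x + expSpec ahat0 ahat x -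
        2 * Real.sqrt (expSpec a0 a x * expSpec ahat0 ahat x) *
          Real.cos (∑' k : ℕ, (a (k + 1) - ahat (k + 1)) * Real.sin (((k : ℝ) + 1) * x)) =
      (2 * Real.pi)⁻¹ * Complex.normSq (∑' n, (u n : ℂ) * (z x) ^ n) := by
    intro x
    rw [stepA x, normSq_sub_exp, hre, hre2, him, him2]
    set RA : ℝ := ∑' k : ℕ, a (k + 1) * Real.cos (((k : ℝ) + 1) * x) with hRA
    set RB : ℝ := ∑' k : ℕ, ahat (k + 1) * Real.cos (((k : ℝ) + 1) * x) with hRB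
    set IA : ℝ := ∑' k : ℕ, a (k + 1) * Real.sin (((k : ℝ) + 1) * x) with hIA
    set IB : ℝ := ∑' k : ℕ, ahat (k + 1) * Real.sin (((k : ℝ) + 1) * x) with hIB
    have hsin1 : Summable (fun k : ℕ => a (k + 1) * Real.sin (((k : ℝ) + 1) * x)) := by
      apply Summable.of_norm_bounded ha
      intro k
      rw [Real.norm_eq_abs, abs_mul]
      calc |a (k+1)| * |Real.sin (((k : ℝ) + 1) * x)| ≤ |a (k+1)| * 1 := by
            apply mul_le_mul_of_nonneg_left (Real.abs_sin_le_one _) (abs_nonneg _)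
        _ = |a (k+1)| := mul_one _
    have hsin2 : Summable (fun k : ℕ => ahat (k + 1) * Real.sin (((k : ℝ) + 1) * x)) := by
      apply Summable.of_norm_bounded hahat
      intro k
      rw [Real.norm_eq_abs, abs_mul]
      calc |ahat (k+1)| * |Real.sin (((k : ℝ) + 1) * x)| ≤ |ahat (k+1)| * 1 := by
            apply mul_le_mul_of_nonneg_left (Real.abs_sin_le_one _) (abs_nonneg _)
        _ = |ahat (k+1)| := mul_one _
    have hcosarg : (∑' k : ℕ, (a (k + 1) - ahat (k + 1)) * Real.sin (((k : ℝ) + 1) * x)) =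
        IA - IB := by
      rw [hIA, hIB, ← Summable.tsum_sub hsin1 hsin2]
      apply tsum_congr
      intro k
      ring
    have hexp1 : expSpec a0 a x = Real.exp a0 * Real.exp (2 * RA) := by
      rw [expSpec, ← hRA, Real.exp_add]
    have hexp2 : expSpec ahat0 ahat x = Real.exp ahat0 * Real.exp (2 * RB) := by
      rw [expSpec, ← hRB, Real.exp_add]
    have hsqrt : Real.sqrt (expSpec a0 a x * expSpec ahat0 ahat x) =
        Real.exp ((a0 + ahat0)/2) * Real.exp (RA + RB) := by
      rw [hexp1, hexp2]
      have h3 : Real.exp a0 * Real.exp (2 * RA) * (Real.exp ahat0 * Real.exp (2 * RB)) =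
          (Real.exp ((a0 + ahat0)/2) * Real.exp (RA + RB))^2 := by
        rw [← Real.exp_add, ← Real.exp_add, ← Real.exp_add, ← Real.exp_add, sq, ← Real.exp_add]
        congr 1
        ring
      rw [h3, Real.sqrt_sq (by positivity)]
    rw [hcosarg, hsqrt, hexp1, hexp2, hσ1sq, hσ2sq, hσσ]
    field_simp
  -- step C : Parseval
  set F : ℕ × ℕ → ℝ → ℝ := fun p x =>
    u p.1 * u p.2 * Real.cos (((p.1 : ℝ) - (p.2 : ℝ)) * x) with hFdef
  have pointwiseC : ∀ x : ℝ, Complex.normSq (∑' n, (u n : ℂ) * (z x) ^ n) =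
      ∑' p : ℕ × ℕ, F p x := by
    intro x
    have hfn := hsumz u habs_u x
    have hgn : Summable (fun n => ‖(starRingEnd ℂ) ((u n : ℂ) * (z x) ^ n)‖) := by
      apply Summable.congr hfn
      intro n
      rw [RCLike.norm_conj]
    have h1 : Complex.normSq (∑' n, (u n : ℂ) * (z x) ^ n) =
        ((∑' n, (u n : ℂ) * (z x) ^ n) *
          (starRingEnd ℂ) (∑' n, (u n : ℂ) * (z x) ^ n)).re := by
      rw [Complex.mul_conj, Complex.ofReal_re]
    rw [h1, Complex.conj_tsum, tsum_mul_tsum_of_summable_norm hfn hgn,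
      Complex.re_tsum (summable_mul_of_summable_norm hfn hgn)]
    apply tsum_congr
    intro p
    have h2 : (u p.1 : ℂ) * (z x) ^ p.1 * (starRingEnd ℂ) ((u p.2 : ℂ) * (z x) ^ p.2) =
        ((u p.1 * u p.2 : ℝ) : ℂ) *
          Complex.exp (((((p.1 : ℝ) - (p.2 : ℝ)) * x : ℝ) : ℂ) * Complex.I) := by
      rw [map_mul, Complex.conj_ofReal, hzpow, hzpow, ← Complex.exp_conj]
      rw [map_mul, Complex.conj_ofReal, Complex.conj_I]
      have e5 : Complex.exp ((((p.1 : ℝ) * x : ℝ) : ℂ) * Complex.I) *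
          Complex.exp ((((p.2 : ℝ) * x : ℝ) : ℂ) * -Complex.I) =
          Complex.exp (((((p.1 : ℝ) - (p.2 : ℝ)) * x : ℝ) : ℂ) * Complex.I) := by
        rw [← Complex.exp_add]
        congr 1
        push_cast
        ring
      calc (u p.1 : ℂ) * Complex.exp ((((p.1 : ℝ) * x : ℝ) : ℂ) * Complex.I) *
            ((u p.2 : ℂ) * Complex.exp ((((p.2 : ℝ) * x : ℝ) : ℂ) * -Complex.I))
          = ((u p.1 * u p.2 : ℝ) : ℂ) *
            (Complex.exp ((((p.1 : ℝ) * x : ℝ) : ℂ) * Complex.I) *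
             Complex.exp ((((p.2 : ℝ) * x : ℝ) : ℂ) * -Complex.I)) := by push_cast; ring
        _ = _ := by rw [e5]
    rw [h2, Complex.re_ofReal_mul, Complex.exp_ofReal_mul_I_re]
  -- the integral of each term
  have hcont_F : ∀ p : ℕ × ℕ, Continuous (F p) := by
    intro p
    apply continuous_const.mul
    exact Real.continuous_cos.comp (continuous_const.mul continuous_id)
  have hvol : (volume (Set.Ioc (0:ℝ) (2 * Real.pi))).toReal = 2 * Real.pi := by
    rw [Real.volume_Ioc, show (2 * Real.pi - 0 : ℝ) = 2 * Real.pi from by ring,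
      ENNReal.toReal_ofReal (by positivity)]
  have hint_F : ∀ p : ℕ × ℕ, IntegrableOn (F p) (Set.Ioc 0 (2 * Real.pi)) volume := by
    intro p
    exact (hcont_F p).integrableOn_Ioc
  have hval : ∀ p : ℕ × ℕ, ∫ x in Set.Ioc (0:ℝ) (2 * Real.pi), F p x =
      if p.1 = p.2 then 2 * Real.pi * u p.1 ^ 2 else 0 := by
    rintro ⟨n, m⟩
    by_cases hnm : n = m
    · subst hnm
      have h8 : (if (n, n).1 = (n, n).2 then 2 * Real.pi * u (n, n).1 ^ 2 else 0) =
          2 * Real.pi * u n ^ 2 := if_pos rfl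
      rw [h8]
      simp only [hFdef, sub_self, zero_mul, Real.cos_zero, mul_one]
      rw [setIntegral_const, measureReal_def, hvol, smul_eq_mul]
      ring
    · rw [if_neg hnm]
      have hθ : ((n : ℝ) - (m : ℝ)) ≠ 0 := by
        rw [sub_ne_zero]
        exact_mod_cast hnm
      simp only [hFdef]
      rw [MeasureTheory.integral_const_mul]
      rw [← intervalIntegral.integral_of_le (by positivity : (0:ℝ) ≤ 2 * Real.pi)]
      have h5 : ∫ x in (0:ℝ)..(2 * Real.pi), Real.cos (((n : ℝ) - (m : ℝ)) * x) = 0 := by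
        rw [intervalIntegral.integral_comp_mul_left Real.cos hθ, integral_cos]
        have h6 : ((n : ℝ) - (m : ℝ)) * (2 * Real.pi) =
            ((2 * ((n : ℤ) - (m : ℤ)) : ℤ) : ℝ) * Real.pi := by
          push_cast
          ring
        rw [mul_zero, Real.sin_zero, h6, Real.sin_int_mul_pi]
        simp
      rw [h5, mul_zero]
  -- summability of the integrals of norms
  have hmaj : Summable (fun p : ℕ × ℕ => |u p.1| * |u p.2| * (2 * Real.pi)) :=
    (habs_u.mul_of_nonneg habs_u (fun _ => abs_nonneg _) (fun _ => abs_nonneg _)).mul_right _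
  have hbound_F : ∀ p : ℕ × ℕ, ∫ x in Set.Ioc (0:ℝ) (2 * Real.pi), ‖F p x‖ ≤
      |u p.1| * |u p.2| * (2 * Real.pi) := by
    intro p
    have h1 : ∀ x : ℝ, ‖F p x‖ ≤ |u p.1| * |u p.2| := by
      intro x
      rw [hFdef]
      simp only [Real.norm_eq_abs, abs_mul]
      calc |u p.1| * |u p.2| * |Real.cos (((p.1 : ℝ) - (p.2 : ℝ)) * x)| ≤
          |u p.1| * |u p.2| * 1 := by
            apply mul_le_mul_of_nonneg_left (Real.abs_cos_le_one _) (by positivity)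
        _ = |u p.1| * |u p.2| := mul_one _
    calc ∫ x in Set.Ioc (0:ℝ) (2 * Real.pi), ‖F p x‖ ≤
        ∫ _x in Set.Ioc (0:ℝ) (2 * Real.pi), |u p.1| * |u p.2| := by
          apply setIntegral_mono ((hint_F p).norm) ((integrableOn_const_iff (C := |u p.1| * |u p.2|)).mpr ?_) (fun x => h1 x)
          right
          rw [Real.volume_Ioc]
          exact ENNReal.ofReal_lt_top
      _ = |u p.1| * |u p.2| * (2 * Real.pi) := by
          rw [setIntegral_const, measureReal_def, hvol, smul_eq_mul]
          ring
  have hFsum : Summable (fun p : ℕ × ℕ => ∫ x in Set.Ioc (0:ℝ) (2 * Real.pi), ‖F p x‖) :=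
    Summable.of_nonneg_of_le (fun p => integral_nonneg (fun x => norm_nonneg _)) hbound_F hmaj
  -- swap integral and sum
  have hswap : ∫ x in Set.Ioc (0:ℝ) (2 * Real.pi), (∑' p : ℕ × ℕ, F p x) =
      ∑' p : ℕ × ℕ, ∫ x in Set.Ioc (0:ℝ) (2 * Real.pi), F p x :=
    (MeasureTheory.integral_tsum_of_summable_integral_norm hint_F hFsum).symm
  -- compute the double sum
  have hdiag : (∑' p : ℕ × ℕ, if p.1 = p.2 then 2 * Real.pi * u p.1 ^ 2 else 0) =
      2 * Real.pi * ∑' n, u n ^ 2 := by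
    have hsummable : Summable (fun p : ℕ × ℕ => if p.1 = p.2 then 2 * Real.pi * u p.1 ^ 2
        else 0) := by
      apply Summable.of_nonneg_of_le (fun p => ?_) (fun p => ?_) hmaj
      · by_cases h : p.1 = p.2
        · rw [if_pos h]; positivity
        · rw [if_neg h]
      · by_cases h : p.1 = p.2
        · rw [if_pos h, ← h]
          have : u p.1 ^ 2 = |u p.1| * |u p.1| := by rw [← sq_abs, sq]
          rw [this]
          nlinarith [abs_nonneg (u p.1), hπ]
        · rw [if_neg h]
          positivity
    rw [Summable.tsum_prod' hsummable (fun n => ?_)]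
    · have hinner : ∀ n : ℕ, (∑' m, if n = m then 2 * Real.pi * u n ^ 2 else 0) =
          2 * Real.pi * u n ^ 2 := by
        intro n
        have hcongr : (fun m => if n = m then 2 * Real.pi * u n ^ 2 else 0) =
            (fun m => if m = n then 2 * Real.pi * u n ^ 2 else 0) := by
          ext m
          by_cases h : n = m
          · rw [if_pos h, if_pos h.symm]
          · rw [if_neg h, if_neg (fun hh => h hh.symm)]
        rw [hcongr]
        exact tsum_ite_eq n _
      calc ∑' (n : ℕ) (m : ℕ), (if (n, m).1 = (n, m).2 then 2 * Real.pi * u (n, m).1 ^ 2 else 0)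
          = ∑' (n : ℕ), 2 * Real.pi * u n ^ 2 := by
            apply tsum_congr
            intro n
            exact hinner n
        _ = 2 * Real.pi * ∑' n, u n ^ 2 := by rw [tsum_mul_left]
    · apply summable_of_ne_finset_zero (s := {n})
      intro m hm
      have h7 : m ≠ n := by simpa using hm
      exact if_neg (fun hh : n = m => h7 hh.symm)
  -- final assembly
  have hintegrand : ∫ x in (0:ℝ)..(2 * Real.pi),
      (expSpec a0 a x + expSpec ahat0 ahat x -
        2 * Real.sqrt (expSpec a0 a x * expSpec ahat0 ahat x) *
          Real.cos (∑' k : ℕ, (a (k + 1) - ahat (k + 1)) * Real.sin (((k : ℝ) + 1) * x))) =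
      (2 * Real.pi)⁻¹ * ∫ x in (0:ℝ)..(2 * Real.pi),
        Complex.normSq (∑' n, (u n : ℂ) * (z x) ^ n) := by
    rw [← intervalIntegral.integral_const_mul]
    apply intervalIntegral.integral_congr
    intro x _
    exact stepB x
  rw [hintegrand]
  have hnorm_integral : ∫ x in (0:ℝ)..(2 * Real.pi),
      Complex.normSq (∑' n, (u n : ℂ) * (z x) ^ n) = 2 * Real.pi * ∑' n, u n ^ 2 := by
    rw [intervalIntegral.integral_of_le (by positivity : (0:ℝ) ≤ 2 * Real.pi)]
    calc ∫ x in Set.Ioc (0:ℝ) (2 * Real.pi), Complex.normSq (∑' n, (u n : ℂ) * (z x) ^ n)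
        = ∫ x in Set.Ioc (0:ℝ) (2 * Real.pi), (∑' p : ℕ × ℕ, F p x) := by
          apply integral_congr_ae
          apply ae_of_all
          intro x
          exact pointwiseC x
      _ = ∑' p : ℕ × ℕ, ∫ x in Set.Ioc (0:ℝ) (2 * Real.pi), F p x := hswap
      _ = ∑' p : ℕ × ℕ, (if p.1 = p.2 then 2 * Real.pi * u p.1 ^ 2 else 0) := by
          apply tsum_congr
          intro p
          exact hval p
      _ = 2 * Real.pi * ∑' n, u n ^ 2 := hdiag
  rw [hnorm_integral]
  field_simp
  rfl
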